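/- The integral of exp(-cot²(x)) over x from 0 to π/2 equals (eπ/2)·erfc(1). -/

import Mathlib

open Real MeasureTheory

noncomputable def erfc (x : ℝ) : ℝ := (2 / Real.sqrt π) * ∫ t in Set.Ioi x, Real.exp (-t ^ 2)

open Set Filter in
private lemma exp_int' {c : ℝ} (hc : 0 < c) : ∫ s in Ioi (0:ℝ), Real.exp (-(c*s)) = 1/c := by
  have h := integral_Ioi_of_hasDerivAt_of_tendsto' (a := 0) (f := fun s => -Real.exp (-(c*s))/c)
    (f' := fun s => Real.exp (-(c*s))) (m := 0) ?_ ?_ ?_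
  · rw [h]; field_simp; simp
  · intro x _
    have : HasDerivAt (fun s : ℝ => -(c*s)) (-c) x := by
      simpa using ((hasDerivAt_id x).const_mul c).fun_neg
    have := (this.exp).fun_neg.div_const c
    refine this.congr_deriv ?_
    rw [mul_neg, neg_neg, mul_div_assoc, div_self hc.ne', mul_one]
  · have : IntegrableOn (fun x : ℝ => Real.exp (-c * x)) (Ioi 0) := exp_neg_integrableOn_Ioi 0 hc
    simpa [neg_mul] using this
  · have h1 : Tendsto (fun s : ℝ => Real.exp (-(c*s))) atTop (nhds 0) := by
      apply Real.tendsto_exp_atBot.comp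
      have : Tendsto (fun s : ℝ => c * s) atTop atTop :=
        Tendsto.const_mul_atTop hc tendsto_id
      exact tendsto_neg_atTop_atBot.comp this
    have := (h1.neg.div_const c)
    simpa using this

open Set in
private lemma arctan_image' : Real.arctan '' Ioi 0 = Ioo 0 (π/2) := by
  ext y
  constructor
  · rintro ⟨t, ht, rfl⟩
    exact ⟨by simpa using Real.arctan_strictMono ht, Real.arctan_lt_pi_div_two t⟩
  · rintro ⟨h1, h2⟩
    refine ⟨Real.tan y, Real.tan_pos_of_pos_of_lt_pi_div_two h1 h2, ?_⟩
    exact Real.arctan_tan (by linarith [Real.pi_pos]) h2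

open Set in
private lemma sub1' : ∫ x in Ioo 0 (π/2), Real.exp (-Real.tan x ^ 2)
    = ∫ t in Ioi (0:ℝ), Real.exp (-t^2) / (1+t^2) := by
  rw [← arctan_image']
  rw [integral_image_eq_integral_abs_deriv_smul measurableSet_Ioi
    (fun t _ => (Real.hasDerivAt_arctan t).hasDerivWithinAt)
    (Real.arctan_injective.injOn) (fun y => Real.exp (-Real.tan y ^ 2))]
  apply setIntegral_congr_fun measurableSet_Ioi
  intro t _
  have h1 : (0:ℝ) < 1 + t^2 := by positivity
  dsimp only
  rw [Real.tan_arctan, abs_of_pos (by positivity), smul_eq_mul]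
  field_simp

open Set in
private lemma sq_image' : (fun u : ℝ => u^2 - 1) '' Ioi 1 = Ioi 0 := by
  ext s
  constructor
  · rintro ⟨u, hu, rfl⟩
    simp only [mem_Ioi] at *
    nlinarith
  · intro hs
    refine ⟨Real.sqrt (1+s), ?_, ?_⟩
    · simp only [mem_Ioi] at *
      have hs' := hs
      nlinarith [Real.sq_sqrt (by linarith : (0:ℝ) ≤ 1+s), Real.sqrt_nonneg (1+s)]
    · show Real.sqrt (1+s) ^ 2 - 1 = s
      rw [Real.sq_sqrt (by linarith [mem_Ioi.mp hs] : (0:ℝ) ≤ 1+s)]; ring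

open Set in
private lemma sub2' : ∫ s in Ioi (0:ℝ), Real.exp (-s) / Real.sqrt (1+s)
    = 2 * Real.exp 1 * ∫ u in Ioi (1:ℝ), Real.exp (-u^2) := by
  rw [← sq_image']
  rw [integral_image_eq_integral_abs_deriv_smul measurableSet_Ioi
    (fun u _ => ((hasDerivAt_pow 2 u).sub_const 1).hasDerivWithinAt)
    (fun a ha b hb h => by
      have ha' : (0:ℝ) < a := lt_trans one_pos ha
      have hb' : (0:ℝ) < b := lt_trans one_pos hb
      have h' : a^2 - 1 = b^2 - 1 := h
      have : a^2 = b^2 := by linarith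
      calc a = Real.sqrt (a^2) := (Real.sqrt_sq ha'.le).symm
        _ = Real.sqrt (b^2) := by rw [this]
        _ = b := Real.sqrt_sq hb'.le)
    (fun s => Real.exp (-s) / Real.sqrt (1+s))]
  rw [← integral_const_mul]
  apply setIntegral_congr_fun measurableSet_Ioi
  intro u hu
  simp only [mem_Ioi] at hu
  have hu0 : (0:ℝ) < u := lt_trans one_pos hu
  have h1 : (1:ℝ) + (u^2 - 1) = u^2 := by ring
  dsimp only
  rw [smul_eq_mul, h1, Real.sqrt_sq hu0.le, neg_sub, Real.exp_sub]
  norm_num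
  rw [abs_of_pos hu0]
  rw [Real.exp_neg]
  field_simp

open Set Filter in
private lemma key' : ∫ t in Ioi (0:ℝ), Real.exp (-t^2) / (1+t^2)
    = ∫ s in Ioi (0:ℝ), Real.exp (-s) * (Real.sqrt (π/(1+s)) / 2) := by
  set μ := volume.restrict (Ioi (0:ℝ))
  have hint : Integrable (fun p : ℝ × ℝ => Real.exp (-p.1) * Real.exp (-((1+p.1)*p.2^2)))
      (μ.prod μ) := by
    have hbound : Integrable (fun p : ℝ × ℝ => Real.exp (-p.1) * Real.exp (-p.2^2))
        (μ.prod μ) := by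
      have h1 : Integrable (fun x : ℝ => Real.exp (-x)) μ := by
        have := exp_neg_integrableOn_Ioi (0:ℝ) one_pos
        simp only [neg_mul, one_mul] at this
        exact this
      have h2 : Integrable (fun x : ℝ => Real.exp (-x^2)) μ := by
        have := (integrable_exp_neg_mul_sq one_pos).integrableOn (s := Ioi 0)
        simp only [neg_mul, one_mul] at this
        exact this
      exact h1.mul_prod h2
    apply hbound.mono'
    · apply Continuous.aestronglyMeasurable
      fun_prop
    · have hμ : μ.prod μ = (volume.prod volume).restrict ((Ioi (0:ℝ)) ×ˢ (Ioi (0:ℝ))) :=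
        Measure.prod_restrict _ _
      rw [hμ]
      filter_upwards [ae_restrict_mem (measurableSet_Ioi.prod measurableSet_Ioi)] with p hp
      obtain ⟨hp1, hp2⟩ := hp
      simp only [mem_Ioi] at hp1
      have h3 : Real.exp (-((1+p.1)*p.2^2)) ≤ Real.exp (-p.2^2) := by
        apply Real.exp_le_exp.mpr
        nlinarith [sq_nonneg p.2]
      have h4 : (0:ℝ) < Real.exp (-p.1) := Real.exp_pos _
      rw [Real.norm_eq_abs, abs_of_pos (by positivity)]
      exact mul_le_mul_of_nonneg_left h3 h4.le
  have stepA : ∀ t : ℝ, ∫ s in Ioi (0:ℝ), Real.exp (-s) * Real.exp (-((1+s)*t^2))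
      = Real.exp (-t^2) / (1+t^2) := by
    intro t
    have h1 : (0:ℝ) < 1 + t^2 := by positivity
    have : ∀ s : ℝ, Real.exp (-s) * Real.exp (-((1+s)*t^2))
        = Real.exp (-t^2) * Real.exp (-((1+t^2)*s)) := by
      intro s
      rw [← Real.exp_add, ← Real.exp_add]
      ring_nf
    simp_rw [this]
    rw [integral_const_mul, exp_int' h1]
    ring
  have stepB : ∀ s : ℝ, ∫ t in Ioi (0:ℝ), Real.exp (-s) * Real.exp (-((1+s)*t^2))
      = Real.exp (-s) * (Real.sqrt (π/(1+s)) / 2) := by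
    intro s
    rw [integral_const_mul]
    congr 1
    have := integral_gaussian_Ioi (1+s)
    simp only [neg_mul] at this
    exact this
  calc ∫ t in Ioi (0:ℝ), Real.exp (-t^2) / (1+t^2)
      = ∫ t in Ioi (0:ℝ), ∫ s in Ioi (0:ℝ), Real.exp (-s) * Real.exp (-((1+s)*t^2)) := by
        exact (integral_congr_ae (Filter.Eventually.of_forall (fun t => stepA t))).symm
    _ = ∫ s in Ioi (0:ℝ), ∫ t in Ioi (0:ℝ), Real.exp (-s) * Real.exp (-((1+s)*t^2)) := by
        exact (integral_integral_swap hint).symm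
    _ = ∫ s in Ioi (0:ℝ), Real.exp (-s) * (Real.sqrt (π/(1+s)) / 2) :=
        integral_congr_ae (Filter.Eventually.of_forall (fun s => stepB s))

theorem stmt_3 :
    ∫ x in (0:ℝ)..(π / 2), Real.exp (-(Real.cos x / Real.sin x) ^ 2)
      = (Real.exp 1 * π / 2) * erfc 1 := by
  have h0 : (0:ℝ) ≤ π/2 := by positivity
  have hflip : ∫ x in (0:ℝ)..(π / 2), Real.exp (-(Real.cos x / Real.sin x) ^ 2)
      = ∫ x in (0:ℝ)..(π / 2), Real.exp (-Real.tan x ^ 2) := by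
    have h := intervalIntegral.integral_comp_sub_left (a := (0:ℝ)) (b := π/2)
      (fun y => Real.exp (-(Real.cos y / Real.sin y) ^ 2)) (π/2)
    simp only [Real.cos_pi_div_two_sub, Real.sin_pi_div_two_sub, sub_self, sub_zero] at h
    rw [← h]
    apply intervalIntegral.integral_congr
    intro x _
    dsimp only
    rw [Real.tan_eq_sin_div_cos]
  rw [hflip, intervalIntegral.integral_of_le h0, integral_Ioc_eq_integral_Ioo, sub1', key']
  have hstep : ∫ s in Set.Ioi (0:ℝ), Real.exp (-s) * (Real.sqrt (π/(1+s)) / 2)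
      = (Real.sqrt π / 2) * ∫ s in Set.Ioi (0:ℝ), Real.exp (-s) / Real.sqrt (1+s) := by
    rw [← integral_const_mul]
    apply setIntegral_congr_fun measurableSet_Ioi
    intro s hs
    have hs' : (0:ℝ) < 1 + s := by linarith [Set.mem_Ioi.mp hs]
    dsimp only
    rw [Real.sqrt_div Real.pi_pos.le]
    ring
  rw [hstep, sub2']
  rw [erfc]
  have hπ : (0:ℝ) < Real.sqrt π := Real.sqrt_pos.mpr Real.pi_pos
  have hππ : Real.sqrt π * Real.sqrt π = π := Real.mul_self_sqrt Real.pi_pos.le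
  have : ∀ t : ℝ, -t^2 = -t^2 := fun _ => rfl
  set I := ∫ u in Set.Ioi (1:ℝ), Real.exp (-u^2) with hI
  field_simp
  linear_combination I * hππ
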